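/- Homomorphisms reflect reductions: if f is a homomorphism and (f α, σ) reduces in one step to (β', σ'), then either α is a value, or there exists β such that (α, σ) reduces in one step to (β, σ') and f β = β'. -/
import Mathlib

/-- Computations with values, errors, delays, and effect nodes. -/
inductive Comp (V E : Type) (I : Type) (A B : I → Type) : Type where
  | val : V → Comp V E I A B
  | err : E → Comp V E I A B
  | tick : Comp V E I A B → Comp V E I A B
  | vis : (i : I) → A i → (B i → Comp V E I A B) → Comp V E I A B

variable {V E I S : Type} {A B : I → Type}

/-- `f` is a homomorphism: it commutes with `Err`, `Tick` and `Vis`. -/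
def IsHom (f : Comp V E I A B → Comp V E I A B) : Prop :=
  (∀ e, f (Comp.err e) = Comp.err e) ∧
  (∀ α, f (Comp.tick α) = Comp.tick (f α)) ∧
  (∀ i x k, f (Comp.vis i x k) = Comp.vis i x (fun y => f (k y)))

/-- One-step reduction on configurations, given a reifier `r`: unfold a `Tick`,
or reify a `Vis` node using `r`. -/
inductive Step (r : ∀ i, A i × S → Option (B i × S)) :
    Comp V E I A B × S → Comp V E I A B × S → Prop where
  | tick (β : Comp V E I A B) (σ : S) : Step r (Comp.tick β, σ) (β, σ)
  | vis (i : I) (x : A i) (k : B i → Comp V E I A B) (y : B i) (σ σ' : S) :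
      r i (x, σ) = some (y, σ') → Step r (Comp.vis i x k, σ) (k y, σ')

/-- Homomorphisms reflect reductions: if `f` is a homomorphism and
`(f α, σ) ↝ (β', σ')`, then either `α` is a value, or there is `β` with
`(α, σ) ↝ (β, σ')` and `f β = β'`. -/
theorem hom_reflects_step (r : ∀ i, A i × S → Option (B i × S))
    (f : Comp V E I A B → Comp V E I A B) (hf : IsHom f)
    (α β' : Comp V E I A B) (σ σ' : S)
    (h : Step r (f α, σ) (β', σ')) :
    (∃ v : V, α = Comp.val v) ∨
    ∃ β, Step r (α, σ) (β, σ') ∧ f β = β' := by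
  obtain ⟨he, ht, hv⟩ := hf
  cases α with
  | val v => exact Or.inl ⟨v, rfl⟩
  | err e =>
      rw [he] at h; cases h
  | tick a =>
      rw [ht] at h
      cases h
      exact Or.inr ⟨a, Step.tick a σ, rfl⟩
  | vis i x k =>
      rw [hv] at h
      cases h with
      | vis _ _ _ y _ _ hr =>
          exact Or.inr ⟨k y, Step.vis i x k y σ σ' hr, rfl⟩
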